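/- Let X ∈ ℝ^{d×N}, let X_p be its best rank-p approximation (truncated SVD), and let (Ã, B̃) minimize ‖X_p − X_p A B‖_F over column stochastic A ∈ ℝ^{N×k}, B ∈ ℝ^{k×N}. Then (1/√N)‖X − XÃB̃‖_F ≤ opt(X) + 4σ_{p+1}(X), where opt(X) is the minimum of (1/√N)‖X − XAB‖_F over column stochastic A, B and σ_{p+1}(X) is the (p+1)-st singular value of X. -/

import Mathlib

open Matrix

def ColStoch {m n : Type*} [Fintype m] [Fintype n] (M : Matrix m n ℝ) : Prop :=
  (∀ i j, 0 ≤ M i j) ∧ ∀ j, ∑ i, M i j = 1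

noncomputable def frob {m n : Type*} [Fintype m] [Fintype n] (M : Matrix m n ℝ) : ℝ :=
  Real.sqrt (∑ i, ∑ j, (M i j) ^ 2)

noncomputable def spec {m n : ℕ} (M : Matrix (Fin m) (Fin n) ℝ) : ℝ :=
  ‖LinearMap.toContinuousLinearMap (Matrix.toEuclideanLin M)‖

/-- `opt X` : the optimal value of archetypal analysis with `k` archetypes. -/
noncomputable def opt {d N : ℕ} (k : ℕ) (X : Matrix (Fin d) (Fin N) ℝ) : ℝ :=
  sInf {c | ∃ A : Matrix (Fin N) (Fin k) ℝ, ∃ B : Matrix (Fin k) (Fin N) ℝ,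
    ColStoch A ∧ ColStoch B ∧ c = (1 / Real.sqrt N) * frob (X - X * A * B)}

/-- `sigmaSucc p X` : the `(p+1)`-st singular value of `X`, characterized via
Eckart–Young as the best rank-`p` approximation error in spectral norm. -/
noncomputable def sigmaSucc {d N : ℕ} (p : ℕ) (X : Matrix (Fin d) (Fin N) ℝ) : ℝ :=
  sInf {c | ∃ Y : Matrix (Fin d) (Fin N) ℝ, Y.rank ≤ p ∧ c = spec (X - Y)}

lemma spec_nonneg {m n : ℕ} (M : Matrix (Fin m) (Fin n) ℝ) : 0 ≤ spec M := norm_nonneg _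

lemma frob_nonneg {m n : Type*} [Fintype m] [Fintype n] (M : Matrix m n ℝ) : 0 ≤ frob M :=
  Real.sqrt_nonneg _

lemma frob_eq_norm {d N : ℕ} (M : Matrix (Fin d) (Fin N) ℝ) :
    frob M = ‖((WithLp.equiv 2 ((Fin d × Fin N) → ℝ)).symm (fun p => M p.1 p.2) :
      EuclideanSpace ℝ (Fin d × Fin N))‖ := by
  rw [EuclideanSpace.norm_eq, frob]
  congr 1
  rw [Fintype.sum_prod_type]
  exact Finset.sum_congr rfl fun i _ => Finset.sum_congr rfl fun j _ => by simp [sq_abs]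

lemma frob_add_le {d N : ℕ} (M M' : Matrix (Fin d) (Fin N) ℝ) :
    frob (M + M') ≤ frob M + frob M' := by
  rw [frob_eq_norm, frob_eq_norm, frob_eq_norm]
  have h : ((WithLp.equiv 2 ((Fin d × Fin N) → ℝ)).symm (fun p => (M + M') p.1 p.2) :
      EuclideanSpace ℝ (Fin d × Fin N)) =
      (WithLp.equiv 2 _).symm (fun p => M p.1 p.2) +
      (WithLp.equiv 2 _).symm (fun p => M' p.1 p.2) := rfl
  rw [h]
  exact norm_add_le _ _

lemma frob_add3_le {d N : ℕ} (a b c : Matrix (Fin d) (Fin N) ℝ) :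
    frob (a + (b + c)) ≤ frob a + (frob b + frob c) :=
  le_trans (frob_add_le _ _) (add_le_add le_rfl (frob_add_le _ _))

lemma frob_neg {d N : ℕ} (M : Matrix (Fin d) (Fin N) ℝ) : frob (-M) = frob M := by
  unfold frob
  congr 1
  exact Finset.sum_congr rfl fun i _ => Finset.sum_congr rfl fun j _ => by
    simp [Matrix.neg_apply]

lemma sum_sq_mulVec_le {d N : ℕ} (E : Matrix (Fin d) (Fin N) ℝ) (w : Fin N → ℝ)
    (h0 : ∀ l, 0 ≤ w l) (h1 : ∑ l, w l = 1) :
    ∑ i, (∑ l, E i l * w l) ^ 2 ≤ spec E ^ 2 := by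
  have hw1 : ∀ l, w l ≤ 1 := by
    intro l
    rw [← h1]
    exact Finset.single_le_sum (fun i _ => h0 i) (Finset.mem_univ l)
  set v : EuclideanSpace ℝ (Fin N) := (WithLp.equiv 2 (Fin N → ℝ)).symm w with hv
  have hnv : ‖v‖ ≤ 1 := by
    rw [EuclideanSpace.norm_eq]
    refine Real.sqrt_le_one.mpr ?_
    calc ∑ i, ‖v i‖ ^ 2 ≤ ∑ i, w i := by
          refine Finset.sum_le_sum fun i _ => ?_
          have hvi : ‖v i‖ = w i := by
            simp [hv, Real.norm_eq_abs, abs_of_nonneg (h0 i)]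
          rw [hvi]
          nlinarith [h0 i, hw1 i]
      _ = 1 := h1
  have hnorm : ‖LinearMap.toContinuousLinearMap (Matrix.toEuclideanLin E) v‖
      = Real.sqrt (∑ i, (∑ l, E i l * w l) ^ 2) := by
    rw [LinearMap.coe_toContinuousLinearMap']
    rw [hv, Matrix.toEuclideanLin_apply, EuclideanSpace.norm_eq]
    congr 1
    refine Finset.sum_congr rfl fun i _ => ?_
    simp [Matrix.mulVec, dotProduct, sq_abs]
  have hle : Real.sqrt (∑ i, (∑ l, E i l * w l) ^ 2) ≤ spec E := by
    rw [← hnorm]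
    calc ‖LinearMap.toContinuousLinearMap (Matrix.toEuclideanLin E) v‖
        ≤ spec E * ‖v‖ :=
          (LinearMap.toContinuousLinearMap (Matrix.toEuclideanLin E)).le_opNorm v
      _ ≤ spec E * 1 := mul_le_mul_of_nonneg_left hnv (spec_nonneg E)
      _ = spec E := mul_one _
  have hS : 0 ≤ ∑ i, (∑ l, E i l * w l) ^ 2 := Finset.sum_nonneg fun i _ => sq_nonneg _
  nlinarith [Real.sq_sqrt hS, Real.sqrt_nonneg (∑ i, (∑ l, E i l * w l) ^ 2)]

lemma frob_mul_colStoch_le {d N M' : ℕ} (E : Matrix (Fin d) (Fin N) ℝ)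
    (C : Matrix (Fin N) (Fin M') ℝ) (hC : ColStoch C) :
    frob (E * C) ≤ Real.sqrt M' * spec E := by
  have hb : ∀ j, ∑ i, ((E * C) i j) ^ 2 ≤ spec E ^ 2 := by
    intro j
    have := sum_sq_mulVec_le E (fun l => C l j) (fun l => hC.1 l j) (hC.2 j)
    simpa [Matrix.mul_apply] using this
  rw [frob, Finset.sum_comm]
  calc Real.sqrt (∑ j, ∑ i, ((E * C) i j) ^ 2)
      ≤ Real.sqrt (∑ _j : Fin M', spec E ^ 2) :=
        Real.sqrt_le_sqrt (Finset.sum_le_sum fun j _ => hb j)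
    _ = Real.sqrt M' * spec E := by
        rw [Finset.sum_const, Finset.card_univ, Fintype.card_fin, nsmul_eq_mul,
          Real.sqrt_mul (by positivity), Real.sqrt_sq (spec_nonneg E)]

lemma colStoch_one {N : ℕ} : ColStoch (1 : Matrix (Fin N) (Fin N) ℝ) := by
  constructor
  · intro i j
    by_cases h : i = j <;> simp [Matrix.one_apply, h]
  · intro j
    simp [Matrix.one_apply]

lemma frob_le_sqrt_mul_spec {d N : ℕ} (E : Matrix (Fin d) (Fin N) ℝ) :
    frob E ≤ Real.sqrt N * spec E := by
  simpa using frob_mul_colStoch_le E 1 colStoch_one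

lemma ColStoch.matmul {a b c : ℕ} {A : Matrix (Fin a) (Fin b) ℝ} {B : Matrix (Fin b) (Fin c) ℝ}
    (hA : ColStoch A) (hB : ColStoch B) : ColStoch (A * B) := by
  constructor
  · intro i j
    rw [Matrix.mul_apply]
    exact Finset.sum_nonneg fun l _ => mul_nonneg (hA.1 i l) (hB.1 l j)
  · intro j
    simp only [Matrix.mul_apply]
    rw [Finset.sum_comm]
    calc ∑ l, ∑ i, A i l * B l j = ∑ l, (∑ i, A i l) * B l j := by
          exact Finset.sum_congr rfl fun l _ => (Finset.sum_mul _ _ _).symm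
      _ = ∑ l, B l j := by
          refine Finset.sum_congr rfl fun l _ => ?_
          rw [hA.2 l, one_mul]
      _ = 1 := hB.2 j

/-- Archetypal analysis applied to the truncated SVD `X_p` of `X` yields a
near-optimal solution: `(1/√N)‖X − XÃB̃‖_F ≤ opt(X) + 4σ_{p+1}(X)`. -/
theorem aa_truncated_svd {d N k : ℕ} (p : ℕ) (X Xp : Matrix (Fin d) (Fin N) ℝ)
    (hrank : Xp.rank ≤ p) (hbest : spec (X - Xp) = sigmaSucc p X)
    (At : Matrix (Fin N) (Fin k) ℝ) (Bt : Matrix (Fin k) (Fin N) ℝ)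
    (hAt : ColStoch At) (hBt : ColStoch Bt)
    (hmin : ∀ A : Matrix (Fin N) (Fin k) ℝ, ∀ B : Matrix (Fin k) (Fin N) ℝ,
      ColStoch A → ColStoch B →
      frob (Xp - Xp * At * Bt) ≤ frob (Xp - Xp * A * B)) :
    (1 / Real.sqrt N) * frob (X - X * At * Bt) ≤ opt k X + 4 * sigmaSucc p X := by
  have hopt0 : 0 ≤ opt k X := by
    apply Real.sInf_nonneg
    rintro c ⟨A, B, _, _, rfl⟩
    exact mul_nonneg (by positivity) (frob_nonneg _)
  have hsig0 : 0 ≤ sigmaSucc p X := by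
    apply Real.sInf_nonneg
    rintro c ⟨Y, _, rfl⟩
    exact spec_nonneg _
  rcases Nat.eq_zero_or_pos N with hN | hN
  · subst hN
    rw [show ((0 : ℕ) : ℝ) = 0 by norm_num, Real.sqrt_zero, div_zero, zero_mul]
    linarith
  set σ := spec (X - Xp) with hσdef
  have hσ0 : 0 ≤ σ := spec_nonneg _
  set s := Real.sqrt N with hsdef
  have hs : 0 < s := Real.sqrt_pos.mpr (by exact_mod_cast hN)
  have hE1 : frob (X - Xp) ≤ s * σ := frob_le_sqrt_mul_spec _
  have hEC : ∀ (C : Matrix (Fin N) (Fin N) ℝ), ColStoch C →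
      frob ((X - Xp) * C) ≤ s * σ := fun C hC => frob_mul_colStoch_le _ _ hC
  have hnegmul : ∀ (C : Matrix (Fin N) (Fin N) ℝ), ColStoch C →
      frob ((Xp - X) * C) ≤ s * σ := by
    intro C hC
    have h : (Xp - X) * C = -((X - Xp) * C) := by
      rw [← Matrix.neg_mul, neg_sub]
    rw [h, frob_neg]
    exact hEC C hC
  have key : ∀ (A : Matrix (Fin N) (Fin k) ℝ) (B : Matrix (Fin k) (Fin N) ℝ),
      ColStoch A → ColStoch B →
      frob (X - X * At * Bt) ≤ frob (X - X * A * B) + 4 * (s * σ) := by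
    intro A B hA hB
    have d1 : X - X * At * Bt =
        (X - Xp) + ((Xp - Xp * At * Bt) + (Xp - X) * (At * Bt)) := by
      rw [Matrix.sub_mul, ← Matrix.mul_assoc, ← Matrix.mul_assoc]
      abel
    have d2 : Xp - Xp * A * B =
        (Xp - X) + ((X - X * A * B) + (X - Xp) * (A * B)) := by
      rw [Matrix.sub_mul, ← Matrix.mul_assoc, ← Matrix.mul_assoc]
      abel
    have hfnXpX : frob (Xp - X) = frob (X - Xp) := by
      rw [show Xp - X = -(X - Xp) by rw [neg_sub], frob_neg]
    have t1 : frob (X - X * At * Bt) ≤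
        frob (X - Xp) + (frob (Xp - Xp * At * Bt) + frob ((Xp - X) * (At * Bt))) := by
      rw [d1]; exact frob_add3_le _ _ _
    have t2 : frob (Xp - Xp * A * B) ≤
        frob (Xp - X) + (frob (X - X * A * B) + frob ((X - Xp) * (A * B))) := by
      rw [d2]; exact frob_add3_le _ _ _
    have b1 := hnegmul (At * Bt) (hAt.matmul hBt)
    have b2 := hEC (A * B) (hA.matmul hB)
    have b3 := hmin A B hA hB
    rw [hfnXpX] at t2
    linarith
  have hle : (1 / s) * frob (X - X * At * Bt) - 4 * σ ≤ opt k X := by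
    rw [opt]
    refine le_csInf ⟨(1 / Real.sqrt N) * frob (X - X * At * Bt), At, Bt, hAt, hBt, rfl⟩ ?_
    rintro c ⟨A, B, hA, hB, rfl⟩
    rw [← hsdef]
    have h := key A B hA hB
    have h2 := mul_le_mul_of_nonneg_left h (le_of_lt (one_div_pos.mpr hs))
    have hss : (1 / s) * (4 * (s * σ)) = 4 * σ := by
      field_simp
    rw [mul_add, hss] at h2
    linarith
  rw [← hbest]
  linarith
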